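/- There exists a constant φ₀ > 0 such that |φ(k,l)| ≥ φ₀ for all (k,l) ∈ ℝ². (First assertion of Proposition A.1: the phase function is uniformly bounded away from zero on ℝ².) -/

import Mathlib

open Real Complex

/-- Japanese bracket `⟨k⟩ = √(1+k²)`. -/
noncomputable def jb (k : ℝ) : ℝ := Real.sqrt (1 + k ^ 2)

/-- The Fourier symbol `λ̂(k) = -d k² - i⟨k⟩`. -/
noncomputable def lamHat (d : ℝ) (k : ℝ) : ℂ := -(d * k ^ 2 : ℝ) - Complex.I * (jb k : ℝ)

/-- The phase function `φ(k,l) = -λ̂(k) + λ̂(k-l) + λ̂(l)`. -/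
noncomputable def phase (d : ℝ) (k l : ℝ) : ℂ := -lamHat d k + lamHat d (k - l) + lamHat d l

lemma jb_nonneg (k : ℝ) : 0 ≤ jb k := Real.sqrt_nonneg _

lemma abs_le_jb (k : ℝ) : |k| ≤ jb k := by
  rw [jb, ← Real.sqrt_sq_eq_abs]
  exact Real.sqrt_le_sqrt (by nlinarith)

lemma jb_add_le (x y : ℝ) : jb (x + y) ≤ jb x + |y| := by
  have hx := abs_le_jb x
  have h0 : 0 ≤ jb x + |y| := add_nonneg (jb_nonneg x) (abs_nonneg y)
  have h1 : 1 + (x + y) ^ 2 ≤ (jb x + |y|) ^ 2 := by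
    have hsq : jb x ^ 2 = 1 + x ^ 2 := Real.sq_sqrt (by positivity)
    have hxy : x * y ≤ |x| * |y| := le_trans (le_abs_self _) (by rw [abs_mul])
    nlinarith [abs_nonneg y, _root_.sq_abs y, mul_le_mul_of_nonneg_right hx (abs_nonneg y)]
  calc jb (x + y) ≤ Real.sqrt ((jb x + |y|) ^ 2) := Real.sqrt_le_sqrt h1
    _ = jb x + |y| := Real.sqrt_sq h0

lemma jb_gap (l : ℝ) (hl : |l| ≤ 1) : Real.sqrt 2 - 1 + |l| ≤ jb l := by
  have h2 : Real.sqrt 2 ^ 2 = 2 := Real.sq_sqrt (by norm_num)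
  have h2' : (1:ℝ) ≤ Real.sqrt 2 := by nlinarith [Real.sqrt_nonneg 2]
  rw [jb]
  rw [show Real.sqrt 2 - 1 + |l| = Real.sqrt ((Real.sqrt 2 - 1 + |l|) ^ 2) from
    (Real.sqrt_sq (by nlinarith [abs_nonneg l])).symm]
  exact Real.sqrt_le_sqrt (by nlinarith [abs_nonneg l, _root_.sq_abs l])

/-- First assertion of Proposition A.1: the phase function is uniformly bounded away
from zero on `ℝ²`. -/
theorem phase_uniformly_bounded_away_from_zero (d : ℝ) (hd : 0 < d) :
    ∃ φ₀ : ℝ, 0 < φ₀ ∧ ∀ k l : ℝ, φ₀ ≤ ‖phase d k l‖ := by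
  have h2' : (1:ℝ) < Real.sqrt 2 := by
    nlinarith [Real.sq_sqrt (show (0:ℝ) ≤ 2 by norm_num), Real.sqrt_nonneg 2]
  refine ⟨min (2 * d) (Real.sqrt 2 - 1), lt_min (by linarith) (by linarith), ?_⟩
  intro k l
  have hre : (phase d k l).re = 2 * d * ((k - l) * l) := by
    simp [phase, lamHat, ← Complex.ofReal_pow]; ring
  have him : (phase d k l).im = jb k - jb (k - l) - jb l := by
    simp [phase, lamHat, ← Complex.ofReal_pow]; ring
  by_cases hcase : 1 ≤ |k - l| ∧ 1 ≤ |l|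
  · -- real part big
    refine le_trans (min_le_left _ _) ?_
    calc 2 * d = 2 * d * 1 := by ring
      _ ≤ 2 * d * (|k - l| * |l|) := by
          apply mul_le_mul_of_nonneg_left _ (by linarith)
          nlinarith [hcase.1, hcase.2]
      _ = |(phase d k l).re| := by
          rw [hre, abs_mul, abs_mul, abs_mul, abs_of_pos hd]
          norm_num
      _ ≤ ‖phase d k l‖ := Complex.abs_re_le_norm _
  · -- one of them small: imaginary part bounded
    refine le_trans (min_le_right _ _) ?_
    have key : Real.sqrt 2 - 1 ≤ |(phase d k l).im| := by
      rw [him]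
      rcases not_and_or.mp hcase with h | h
      · push_neg at h
        have h1 : jb k ≤ jb l + |k - l| := by
          have := jb_add_le l (k - l)
          rwa [show l + (k - l) = k by ring] at this
        have h2 : Real.sqrt 2 - 1 + |k - l| ≤ jb (k - l) := jb_gap _ h.le
        rw [abs_sub_comm, _root_.abs_of_nonneg (by linarith)]
        linarith
      · push_neg at h
        have h1 : jb k ≤ jb (k - l) + |l| := by
          have := jb_add_le (k - l) l
          rwa [show k - l + l = k by ring] at this
        have h2 : Real.sqrt 2 - 1 + |l| ≤ jb l := jb_gap _ h.le
        rw [abs_sub_comm, _root_.abs_of_nonneg (by linarith)]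
        linarith
    exact le_trans key (Complex.abs_im_le_norm _)
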